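/- For every binary operation op : ℝ → ℝ → ℝ, all decision diagrams B₁, B₂ over L, and every assignment σ : L → Bool, eval(Apply(B₁, B₂, op), σ) = op(eval(B₁, σ), eval(B₂, σ)). (Correctness of the Apply procedure for combining decision diagrams, per fixed valuation.) -/

import Mathlib

/-- A decision diagram over a linearly ordered label type `L`:
either a real-valued leaf, or a node with a label and true/false subtrees. -/
inductive DD (L : Type) where
  | leaf (v : ℝ)
  | node (l : L) (t f : DD L)

/-- Evaluation of a decision diagram under an assignment `σ : L → Bool`. -/
noncomputable def DD.eval {L : Type} (σ : L → Bool) : DD L → ℝ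
  | .leaf v => v
  | .node l t f => if σ l then t.eval σ else f.eval σ

/-- The Apply procedure combining two decision diagrams with a binary operation. -/
noncomputable def DD.apply {L : Type} [LinearOrder L] (op : ℝ → ℝ → ℝ) :
    DD L → DD L → DD L
  | .leaf a, .leaf b => .leaf (op a b)
  | .node l₁ t₁ f₁, .leaf b =>
      .node l₁ (DD.apply op t₁ (.leaf b)) (DD.apply op f₁ (.leaf b))
  | .leaf a, .node l₂ t₂ f₂ =>
      .node l₂ (DD.apply op (.leaf a) t₂) (DD.apply op (.leaf a) f₂)
  | .node l₁ t₁ f₁, .node l₂ t₂ f₂ =>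
      if l₁ < l₂ then
        .node l₁ (DD.apply op t₁ (.node l₂ t₂ f₂)) (DD.apply op f₁ (.node l₂ t₂ f₂))
      else if l₂ < l₁ then
        .node l₂ (DD.apply op (.node l₁ t₁ f₁) t₂) (DD.apply op (.node l₁ t₁ f₁) f₂)
      else
        .node l₁ (DD.apply op t₁ t₂) (DD.apply op f₁ f₂)
  termination_by B₁ B₂ => sizeOf B₁ + sizeOf B₂

/-- Correctness of Apply: per fixed valuation, the map of the combined diagram
is the operation applied to the maps of the operands. -/
theorem DD.apply_correct {L : Type} [LinearOrder L] (op : ℝ → ℝ → ℝ)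
    (B₁ B₂ : DD L) (σ : L → Bool) :
    (DD.apply op B₁ B₂).eval σ = op (B₁.eval σ) (B₂.eval σ) := by
  induction B₁, B₂ using @DD.apply.induct L ‹LinearOrder L› with
  | case1 a b => simp [DD.apply, DD.eval]
  | case2 l₁ t₁ f₁ b iht ihf =>
      rw [DD.apply]; simp only [DD.eval, iht, ihf]; split <;> rfl
  | case3 a l₂ t₂ f₂ iht ihf =>
      rw [DD.apply]; simp only [DD.eval, iht, ihf]; split <;> rfl
  | case4 l₁ t₁ f₁ l₂ t₂ f₂ h iht ihf =>
      rw [DD.apply]; simp only [if_pos h, DD.eval, iht, ihf]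
      by_cases h1 : σ l₁ <;> by_cases h2 : σ l₂ <;> simp [h1, h2]
  | case5 l₁ t₁ f₁ l₂ t₂ f₂ h h' iht ihf =>
      rw [DD.apply]; simp only [if_neg h, if_pos h', DD.eval, iht, ihf]
      by_cases h1 : σ l₁ <;> by_cases h2 : σ l₂ <;> simp [h1, h2]
  | case6 l₁ t₁ f₁ l₂ t₂ f₂ h h' iht ihf =>
      rcases lt_trichotomy l₁ l₂ with hlt|heq|hgt
      · exact (h hlt).elim
      · subst heq
        rw [DD.apply]; simp only [if_neg h, if_neg h', DD.eval, iht, ihf]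
        by_cases h1 : σ l₁ <;> simp [h1]
      · exact (h' hgt).elim
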